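/- Let K ≥ 1, r_min ≥ 0, θ = 2^{r_min} − 1, Ψ > 0, let λ_1, …, λ_K be positive reals, let ρ_{1,min}, …, ρ_{K,min} satisfy ρ_{i,min} = θ·(Σ_{j=1}^{i-1} ρ_{j,min} + Ψ/λ_i), let Δρ_1, …, Δρ_K be nonnegative reals, and set ρ_j = ρ_{j,min} + Δρ_j. Define ρ_j^e = (Δρ_j − θ·Σ_{k=1}^{j-1} Δρ_k)·2^{(K-j)·r_min} and n_i^e = (Ψ/λ_i + Σ_{j=1}^{i} ρ_{j,min})·2^{(K-i)·r_min}. Then for every i, log₂(1 + ρ_i λ_i/(Σ_{j=1}^{i-1} ρ_j λ_i + Ψ)) − r_min = log₂(1 + ρ_i^e / (n_i^e + Σ_{j=1}^{i-1} ρ_j^e)). -/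

import Mathlib

/-- Proposition 1 (second part): the excess rate in terms of the normalized effective
excess SNRs `ρe` and effective noises `nE`. -/
theorem stmt_6 (K : ℕ) (hK : 1 ≤ K) (rmin : ℝ) (hr : 0 ≤ rmin) (Ψ : ℝ) (hΨ : 0 < Ψ)
    (lam : ℕ → ℝ) (hlam : ∀ i, 1 ≤ i → i ≤ K → 0 < lam i)
    (ρmin : ℕ → ℝ)
    (hρmin : ∀ i, 1 ≤ i → i ≤ K →
      ρmin i = ((2:ℝ) ^ rmin - 1) * (∑ j ∈ Finset.Icc 1 (i - 1), ρmin j + Ψ / lam i))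
    (Δρ : ℕ → ℝ) (hΔ : ∀ i, 1 ≤ i → i ≤ K → 0 ≤ Δρ i)
    (ρ : ℕ → ℝ) (hρ : ∀ j, ρ j = ρmin j + Δρ j)
    (ρe : ℕ → ℝ)
    (hρe : ∀ j, ρe j = (Δρ j - ((2:ℝ) ^ rmin - 1) * ∑ k ∈ Finset.Icc 1 (j - 1), Δρ k)
        * (2:ℝ) ^ (((K - j : ℕ) : ℝ) * rmin))
    (nE : ℕ → ℝ)
    (hnE : ∀ i, nE i = (Ψ / lam i + ∑ j ∈ Finset.Icc 1 i, ρmin j)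
        * (2:ℝ) ^ (((K - i : ℕ) : ℝ) * rmin)) :
    ∀ i, 1 ≤ i → i ≤ K →
      Real.logb 2 (1 + ρ i * lam i / (∑ j ∈ Finset.Icc 1 (i - 1), ρ j * lam i + Ψ)) - rmin
        = Real.logb 2 (1 + ρe i / (nE i + ∑ j ∈ Finset.Icc 1 (i - 1), ρe j)) := by
  have hE1 : (1:ℝ) ≤ (2:ℝ) ^ rmin := Real.one_le_rpow one_le_two hr
  have hE0 : (0:ℝ) < (2:ℝ) ^ rmin := lt_of_lt_of_le one_pos hE1
  -- nonnegativity of ρmin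
  have hρnn : ∀ i, 1 ≤ i → i ≤ K → 0 ≤ ρmin i := by
    intro i
    induction i using Nat.strong_induction_on with
    | _ i ih =>
      intro h1 h2
      rw [hρmin i h1 h2]
      apply mul_nonneg (by linarith)
      apply add_nonneg
      · apply Finset.sum_nonneg
        intro j hj
        simp only [Finset.mem_Icc] at hj
        exact ih j (by omega) hj.1 (by omega)
      · exact le_of_lt (div_pos hΨ (hlam i h1 h2))
  -- exponent cast identity
  have hexp : ∀ i, 1 ≤ i → i ≤ K →
      (2:ℝ) ^ (((K - (i-1) : ℕ) : ℝ) * rmin)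
        = (2:ℝ) ^ (((K - i : ℕ) : ℝ) * rmin) * (2:ℝ) ^ rmin := by
    intro i h1 h2
    have h : (K - (i-1) : ℕ) = (K - i) + 1 := by omega
    rw [h]
    push_cast
    rw [add_mul, one_mul, Real.rpow_add (by norm_num)]
  -- partial sums of ρe
  have hT : ∀ i, 1 ≤ i → i ≤ K →
      ∑ j ∈ Finset.Icc 1 (i-1), ρe j
        = (∑ j ∈ Finset.Icc 1 (i-1), Δρ j) * (2:ℝ) ^ (((K - (i-1) : ℕ) : ℝ) * rmin) := by
    intro i h1
    induction i, h1 using Nat.le_induction with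
    | base => simp
    | succ n hn ih =>
      intro h2
      have hsplit : ∀ f : ℕ → ℝ,
          ∑ j ∈ Finset.Icc 1 n, f j = ∑ j ∈ Finset.Icc 1 (n-1), f j + f n := by
        intro f
        have h : n = (n-1) + 1 := by omega
        rw [h, Finset.sum_Icc_succ_top (by omega)]
        rw [← h]
      simp only [Nat.add_sub_cancel]
      rw [hsplit ρe, hsplit Δρ, ih (by omega), hρe n, hexp n hn (by omega)]
      ring
  intro i h1 h2
  have hl : 0 < lam i := hlam i h1 h2
  set E : ℝ := (2:ℝ) ^ rmin with hEdef
  set a : ℝ := Ψ / lam i with hadef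
  set S : ℝ := ∑ j ∈ Finset.Icc 1 (i-1), ρmin j with hSdef
  set D : ℝ := ∑ j ∈ Finset.Icc 1 (i-1), Δρ j with hDdef
  set P : ℝ := (2:ℝ) ^ (((K - i : ℕ) : ℝ) * rmin) with hPdef
  have ha : 0 < a := div_pos hΨ hl
  have hS : 0 ≤ S := Finset.sum_nonneg fun j hj => by
    simp only [Finset.mem_Icc] at hj
    exact hρnn j hj.1 (by omega)
  have hD : 0 ≤ D := Finset.sum_nonneg fun j hj => by
    simp only [Finset.mem_Icc] at hj
    exact hΔ j hj.1 (by omega)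
  have hΔi : 0 ≤ Δρ i := hΔ i h1 h2
  have hP : 0 < P := Real.rpow_pos_of_pos (by norm_num) _
  have hρi : ρmin i = (E - 1) * (S + a) := hρmin i h1 h2
  have hΨa : Ψ = a * lam i := by
    rw [hadef, div_mul_cancel₀ _ (ne_of_gt hl)]
  -- the ρ-sum
  have hsum : ∑ j ∈ Finset.Icc 1 (i-1), ρ j * lam i = (S + D) * lam i := by
    simp only [hρ, add_mul]
    rw [Finset.sum_add_distrib, ← Finset.sum_mul, ← Finset.sum_mul, ← add_mul]
  -- sum over Icc 1 i of ρmin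
  have hsplit : ∑ j ∈ Finset.Icc 1 i, ρmin j = S + ρmin i := by
    have h : i = (i-1) + 1 := by omega
    rw [h, Finset.sum_Icc_succ_top (by omega), ← h, hSdef]
  -- the nE value
  have hnEi : nE i = E * (S + a) * P := by
    rw [hnE i, hsplit, hρi]; ring
  -- the ρe-sum
  have hTi : ∑ j ∈ Finset.Icc 1 (i-1), ρe j = D * (P * E) := by
    rw [hT i h1 h2, hexp i h1 h2]
  -- the ρe value
  have hρei : ρe i = (Δρ i - (E - 1) * D) * P := by rw [hρe i]
  -- positivity of the two log arguments
  have hden1 : 0 < (S + D + a) * lam i := by positivity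
  have hX : 1 + ρ i * lam i / (∑ j ∈ Finset.Icc 1 (i-1), ρ j * lam i + Ψ)
      = (E * (S + a) + D + Δρ i) / (S + D + a) := by
    rw [hsum, hρ i, hρi, hΨa]
    have h1 : (S + D) * lam i + a * lam i ≠ 0 := by positivity
    have h2 : S + D + a ≠ 0 := by positivity
    field_simp
    ring
  have hY : 1 + ρe i / (nE i + ∑ j ∈ Finset.Icc 1 (i-1), ρe j)
      = (E * (S + a) + D + Δρ i) / (E * (S + a + D)) := by
    rw [hρei, hnEi, hTi]
    have hd1 : E * (S + a) * P + D * (P * E) ≠ 0 := by positivity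
    have hd2 : E * (S + a + D) ≠ 0 := by positivity
    field_simp
    ring
  have hnum : 0 < E * (S + a) + D + Δρ i := by positivity
  have hden1 : (0:ℝ) < S + D + a := by positivity
  rw [hX, hY]
  have hq : (E * (S + a) + D + Δρ i) / (E * (S + a + D))
      = ((E * (S + a) + D + Δρ i) / (S + D + a)) / E := by
    rw [div_div, div_eq_div_iff (by positivity) (by positivity)]
    ring
  rw [hq, Real.logb_div (by positivity) (ne_of_gt hE0), hEdef,
    Real.logb_rpow (by norm_num) (by norm_num)]
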